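/- Let {N_λ}_{λ∈Λ} be an inductive system of cofinitely generated Z_p-modules over a directed set Λ such that the image of N_λ in N_{λ'} has divisible cokernel for λ' ≥ λ, let L be a cofinitely generated Z_p-module, and {f_λ : N_λ → L} a compatible family of maps with limit f_∞ : N_∞ = colim N_λ → L. Then there exists λ₀ ∈ Λ such that Image(f_λ) = Image(f_{λ₀}) for all λ ≥ λ₀. -/

import Mathlib

abbrev QpModZp (p : ℕ) [Fact p.Prime] :=
  ℚ_[p] ⧸ LinearMap.range (Algebra.linearMap ℤ_[p] ℚ_[p])

def CofinGen (p : ℕ) [Fact p.Prime] (A : Type*) [AddCommGroup A] [Module ℤ_[p] A] : Prop :=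
  Module.Finite ℤ_[p] (A →ₗ[ℤ_[p]] QpModZp p)

def IsDivisibleSubmodule (p : ℕ) [Fact p.Prime] {A : Type*} [AddCommGroup A] [Module ℤ_[p] A]
    (D : Submodule ℤ_[p] A) : Prop :=
  ∀ x ∈ D, ∃ y ∈ D, (p : ℤ_[p]) • y = x

noncomputable def divPart (p : ℕ) [Fact p.Prime] (A : Type*) [AddCommGroup A] [Module ℤ_[p] A] :
    Submodule ℤ_[p] A :=
  sSup {D | IsDivisibleSubmodule p D}

abbrev Cotor (p : ℕ) [Fact p.Prime] (A : Type*) [AddCommGroup A] [Module ℤ_[p] A] :=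
  A ⧸ divPart p A

section Aux

variable {p : ℕ} [Fact p.Prime]

lemma mem_range_algLin_iff (x : ℚ_[p]) :
    x ∈ LinearMap.range (Algebra.linearMap ℤ_[p] ℚ_[p]) ↔ ‖x‖ ≤ 1 := by
  constructor
  · rintro ⟨z, rfl⟩
    simpa using z.norm_le_one
  · intro h
    exact ⟨⟨x, h⟩, rfl⟩

lemma qmk_ne_zero {x : ℚ_[p]} (h : 1 < ‖x‖) :
    (Submodule.Quotient.mk x : QpModZp p) ≠ 0 := by
  rw [Ne, Submodule.Quotient.mk_eq_zero, mem_range_algLin_iff]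
  linarith

lemma baer_QpModZp : Module.Baer ℤ_[p] (QpModZp p) := by
  intro I g
  obtain ⟨c, hc⟩ : ∃ c : ℤ_[p], I = Ideal.span {c} :=
    (IsPrincipalIdealRing.principal I).principal
  by_cases hc0 : c = 0
  · refine ⟨0, fun x hx => ?_⟩
    have hx0 : x = 0 := by
      have := hx
      rw [hc, hc0, Ideal.span_singleton_eq_bot.mpr rfl, Ideal.mem_bot] at this
      exact this
    have h1 : (⟨x, hx⟩ : I) = 0 := Subtype.ext hx0
    rw [h1, map_zero, LinearMap.zero_apply]
  · have hcI : c ∈ I := hc ▸ Ideal.subset_span rfl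
    obtain ⟨y, hy⟩ := Submodule.Quotient.mk_surjective _ (g ⟨c, hcI⟩)
    refine ⟨(Submodule.mkQ _).comp
      (LinearMap.toSpanSingleton ℤ_[p] ℚ_[p] (((c : ℚ_[p]))⁻¹ * y)), fun x hx => ?_⟩
    rw [hc, Ideal.mem_span_singleton'] at hx
    obtain ⟨r, rfl⟩ := hx
    have hcne : (c : ℚ_[p]) ≠ 0 := PadicInt.coe_ne_zero.mpr hc0
    have hsub : (⟨r * c, by rw [← hc] at *; exact I.mul_mem_left r hcI⟩ : I)
        = r • ⟨c, hcI⟩ := by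
      apply Subtype.ext
      simp [smul_eq_mul]
    calc ((Submodule.mkQ _).comp
        (LinearMap.toSpanSingleton ℤ_[p] ℚ_[p] (((c : ℚ_[p]))⁻¹ * y))) (r * c)
        = Submodule.Quotient.mk ((r * c : ℤ_[p]) • (((c : ℚ_[p]))⁻¹ * y)) := rfl
      _ = Submodule.Quotient.mk ((r : ℤ_[p]) • y) := by
          congr 1
          rw [Algebra.smul_def, Algebra.smul_def]
          push_cast
          field_simp
          simp only [PadicInt.algebraMap_apply]
      _ = (r : ℤ_[p]) • (Submodule.Quotient.mk y : QpModZp p) := rfl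
      _ = r • g ⟨c, hcI⟩ := by rw [hy]
      _ = g (r • ⟨c, hcI⟩) := (map_smul g r _).symm
      _ = g ⟨r * c, _⟩ := by rw [hsub]

end Aux

section Sep

variable {p : ℕ} [Fact p.Prime]

set_option synthInstance.maxHeartbeats 800000 in
set_option maxHeartbeats 1600000 in
lemma separating {L : Type*} [AddCommGroup L] [Module ℤ_[p] L]
    (R : Submodule ℤ_[p] L) {x : L} (hx : x ∉ R) :
    ∃ φ : L →ₗ[ℤ_[p]] QpModZp p, (∀ y ∈ R, φ y = 0) ∧ φ x ≠ 0 := by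
  set xb : L ⧸ R := Submodule.Quotient.mk x with hxbdef
  have hxb : xb ≠ 0 := by
    rw [hxbdef, Ne, Submodule.Quotient.mk_eq_zero]
    exact hx
  set I : Ideal ℤ_[p] := Ideal.torsionOf ℤ_[p] (L ⧸ R) xb with hIdef
  obtain ⟨c, hc⟩ : ∃ c : ℤ_[p], I = Ideal.span {c} :=
    (IsPrincipalIdealRing.principal I).principal
  have hcu : ¬ IsUnit c := by
    intro h
    have h1 : (1 : ℤ_[p]) ∈ I := by
      rw [hc, Ideal.span_singleton_eq_top.mpr h]
      trivial
    rw [hIdef, Ideal.mem_torsionOf_iff, one_smul] at h1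
    exact hxb h1
  -- replace c by d which is nonzero and non-unit, with I ≤ span {d}
  have hp1 : 1 < (p : ℝ) := by exact_mod_cast (Fact.out : p.Prime).one_lt
  obtain ⟨d, hd0, hdu, hId⟩ :
      ∃ d : ℤ_[p], d ≠ 0 ∧ ¬ IsUnit d ∧ I ≤ Ideal.span {d} := by
    rcases eq_or_ne c 0 with h0 | h0
    · refine ⟨(p : ℤ_[p]), ?_, ?_, ?_⟩
      · exact_mod_cast (Fact.out : p.Prime).ne_zero
      · intro h
        have := PadicInt.isUnit_iff.mp h
        rw [PadicInt.norm_p, inv_eq_one] at this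
        linarith
      · rw [hc, h0, Ideal.span_singleton_eq_bot.mpr rfl]
        exact bot_le
    · exact ⟨c, h0, hcu, hc.le⟩
  -- the character χ on ℤ_[p]
  have hdnorm : ‖d‖ < 1 := lt_of_le_of_ne d.norm_le_one (by
    intro h; exact hdu (PadicInt.isUnit_iff.mpr h))
  have hdnormpos : (0:ℝ) < ‖d‖ := norm_pos_iff.mpr hd0
  have hdQ : (d : ℚ_[p]) ≠ 0 := PadicInt.coe_ne_zero.mpr hd0
  set χ : ℤ_[p] →ₗ[ℤ_[p]] QpModZp p :=
    (Submodule.mkQ _).comp (LinearMap.toSpanSingleton ℤ_[p] ℚ_[p] ((d : ℚ_[p])⁻¹)) with hχdef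
  have hχ_apply : ∀ a : ℤ_[p], χ a = Submodule.Quotient.mk (a • ((d : ℚ_[p])⁻¹)) :=
    fun a => rfl
  have hχ1 : χ 1 ≠ 0 := by
    rw [hχ_apply, one_smul]
    apply qmk_ne_zero
    rw [norm_inv]
    rw [show ‖(d : ℚ_[p])‖ = ‖d‖ from rfl]
    exact (one_lt_inv₀ hdnormpos).mpr hdnorm
  have hχI : I ≤ LinearMap.ker χ := by
    refine le_trans hId ?_
    rw [Ideal.span_singleton_le_iff_mem, LinearMap.mem_ker, hχ_apply,
      Algebra.smul_def, PadicInt.algebraMap_apply, mul_inv_cancel₀ hdQ,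
      Submodule.Quotient.mk_eq_zero]
    exact ⟨1, by simp⟩
  -- map on the cyclic submodule
  set e := Ideal.quotTorsionOfEquivSpanSingleton ℤ_[p] (L ⧸ R) xb
  let χ' : (ℤ_[p] ⧸ Ideal.torsionOf ℤ_[p] (L ⧸ R) xb) →ₗ[ℤ_[p]] QpModZp p :=
    Submodule.liftQ (Ideal.torsionOf ℤ_[p] (L ⧸ R) xb) χ hχI
  let ψ₀ : (Submodule.span ℤ_[p] {xb} : Submodule ℤ_[p] (L ⧸ R)) →ₗ[ℤ_[p]] QpModZp p :=
    χ'.comp e.symm.toLinearMap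
  obtain ⟨ψ, hψ⟩ := baer_QpModZp.extension_property
    (Submodule.span ℤ_[p] {xb}).subtype Subtype.coe_injective ψ₀
  refine ⟨ψ.comp R.mkQ, fun y hy => ?_, ?_⟩
  · have : R.mkQ y = 0 := (Submodule.Quotient.mk_eq_zero R).mpr hy
    rw [LinearMap.comp_apply, this, map_zero]
  · have hxs : xb ∈ Submodule.span ℤ_[p] ({xb} : Set (L ⧸ R)) :=
      Submodule.mem_span_singleton_self xb
    have h1 : ψ.comp R.mkQ x = ψ ((Submodule.span ℤ_[p] {xb}).subtype ⟨xb, hxs⟩) := rfl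
    rw [h1, ← LinearMap.comp_apply, hψ]
    have h2 : (⟨xb, hxs⟩ : Submodule.span ℤ_[p] ({xb} : Set (L ⧸ R)))
        = e (Submodule.Quotient.mk 1) := by
      apply Subtype.ext
      rw [Ideal.quotTorsionOfEquivSpanSingleton_apply_mk]
      simp
    show ψ₀ _ ≠ 0
    rw [LinearMap.comp_apply, h2]
    show χ' (e.symm.toLinearMap (e (Submodule.Quotient.mk 1))) ≠ 0
    have h3 : e.symm.toLinearMap (e (Submodule.Quotient.mk 1))
        = Submodule.Quotient.mk 1 := e.symm_apply_apply _
    rw [h3]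
    show χ 1 ≠ 0
    exact hχ1

end Sep


open scoped nonZeroDivisors

set_option synthInstance.maxHeartbeats 1000000
set_option maxHeartbeats 2000000

attribute [local instance] LocalizedModule.moduleOfIsLocalization

/-- Stabilization of images: with hypotheses as in Sublemma 2.3 (inductive system of
cofinitely generated `ℤ_p`-modules with divisible cokernels of transitions, compatible
maps `f_λ` to a cofinitely generated `L`), there is `λ₀` with
`Image(f_λ) = Image(f_{λ₀})` for all `λ ≥ λ₀`. -/
theorem stmt9 {p : ℕ} [Fact p.Prime]
    {Λ : Type*} [Preorder Λ] [IsDirected Λ (· ≤ ·)] [Nonempty Λ]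
    (N : Λ → Type*) [∀ l, AddCommGroup (N l)] [∀ l, Module ℤ_[p] (N l)]
    (t : ∀ ⦃i j : Λ⦄, i ≤ j → N i →ₗ[ℤ_[p]] N j)
    (ht_id : ∀ (i : Λ) (x : N i), t (le_refl i) x = x)
    (ht_comp : ∀ (i j k : Λ) (hij : i ≤ j) (hjk : j ≤ k) (x : N i),
      t hjk (t hij x) = t (hij.trans hjk) x)
    (hcofin : ∀ i, CofinGen p (N i))
    (hdivcoker : ∀ (i j : Λ) (hij : i ≤ j), ∀ x : N j, ∃ y : N j, ∃ z : N i,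
      t hij z = x - (p : ℤ_[p]) • y)
    {L : Type*} [AddCommGroup L] [Module ℤ_[p] L] (hL : CofinGen p L)
    (f : ∀ i, N i →ₗ[ℤ_[p]] L)
    (hf : ∀ (i j : Λ) (hij : i ≤ j), (f j).comp (t hij) = f i) :
    ∃ l₀ : Λ, ∀ l : Λ, l₀ ≤ l → LinearMap.range (f l) = LinearMap.range (f l₀) := by
  haveI hLfin : Module.Finite ℤ_[p] (L →ₗ[ℤ_[p]] QpModZp p) := hL
  -- annihilators of the images inside the dual module
  let A : Λ → Submodule ℤ_[p] (L →ₗ[ℤ_[p]] QpModZp p) := fun l =>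
    { carrier := {φ | ∀ n : N l, φ (f l n) = 0}
      add_mem' := fun {a b} ha hb n => by
        rw [LinearMap.add_apply, ha n, hb n, add_zero]
      zero_mem' := fun n => rfl
      smul_mem' := fun c φ hφ n => by
        rw [LinearMap.smul_apply, hφ n, smul_zero] }
  have hmemA : ∀ (l : Λ) (φ : L →ₗ[ℤ_[p]] QpModZp p),
      φ ∈ A l ↔ ∀ n : N l, φ (f l n) = 0 := fun _ _ => Iff.rfl
  have hAanti : ∀ {i j : Λ}, i ≤ j → A j ≤ A i := by
    intro i j hij φ hφ
    rw [hmemA] at hφ ⊢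
    intro n
    rw [← LinearMap.congr_fun (hf i j hij) n]
    exact hφ _
  have hsat : ∀ i j : Λ, i ≤ j → ∀ φ, φ ∈ A i → (p : ℤ_[p]) • φ ∈ A j → φ ∈ A j := by
    intro i j hij φ hi hpj
    rw [hmemA] at hi hpj ⊢
    intro n
    obtain ⟨y, z, hz⟩ := hdivcoker i j hij n
    have hn : n = t hij z + (p : ℤ_[p]) • y := by
      rw [hz]; abel
    have h1 : φ (f j (t hij z)) = 0 := by
      rw [show f j (t hij z) = f i z from LinearMap.congr_fun (hf i j hij) z]
      exact hi z
    have h2 : (p : ℤ_[p]) • φ (f j y) = 0 := by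
      have := hpj y
      rwa [LinearMap.smul_apply] at this
    rw [hn, map_add, map_add, map_smul, map_smul, h1, h2, zero_add]
  have hpow : ∀ i j : Λ, i ≤ j → ∀ (k : ℕ) (φ),
      φ ∈ A i → ((p : ℤ_[p]) ^ k) • φ ∈ A j → φ ∈ A j := by
    intro i j hij k
    induction k with
    | zero => intro φ hi hj; rwa [pow_zero, one_smul] at hj
    | succ k ih =>
      intro φ hi hj
      refine ih φ hi ?_
      have h1 : ((p : ℤ_[p]) ^ k) • φ ∈ A i := Submodule.smul_mem _ _ hi
      have h2 : (p : ℤ_[p]) • (((p : ℤ_[p]) ^ k) • φ) ∈ A j := by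
        rw [smul_smul, ← pow_succ']
        exact hj
      exact hsat i j hij _ h1 h2
  have hscal : ∀ i j : Λ, i ≤ j → ∀ (a : ℤ_[p]), a ≠ 0 →
      ∀ φ, φ ∈ A i → a • φ ∈ A j → φ ∈ A j := by
    intro i j hij a ha φ hi hj
    refine hpow i j hij (a.valuation) φ hi ?_
    have key : ((p : ℤ_[p]) ^ a.valuation) • φ
        = (↑(PadicInt.unitCoeff ha)⁻¹ : ℤ_[p]) • (a • φ) := by
      rw [smul_smul]
      congr 1
      symm
      calc (↑(PadicInt.unitCoeff ha)⁻¹ : ℤ_[p]) * a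
          = ↑(PadicInt.unitCoeff ha)⁻¹
            * (↑(PadicInt.unitCoeff ha) * (p : ℤ_[p]) ^ a.valuation) := by
            congr 1
            exact PadicInt.unitCoeff_spec ha
        _ = (p : ℤ_[p]) ^ a.valuation := Units.inv_mul_cancel_left _ _
    rw [key]
    exact Submodule.smul_mem _ _ hj
  -- pass to the localized (rational) vector space
  let ι : (L →ₗ[ℤ_[p]] QpModZp p) →ₗ[ℤ_[p]]
      LocalizedModule ℤ_[p]⁰ (L →ₗ[ℤ_[p]] QpModZp p) :=
    LocalizedModule.mkLinearMap ℤ_[p]⁰ (L →ₗ[ℤ_[p]] QpModZp p)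
  haveI hVfin : Module.Finite ℚ_[p] (LocalizedModule ℤ_[p]⁰ (L →ₗ[ℤ_[p]] QpModZp p)) :=
    Module.Finite.of_isLocalizedModule (Rₚ := ℚ_[p]) ℤ_[p]⁰ ι
  let Sp : Λ → Submodule ℚ_[p] (LocalizedModule ℤ_[p]⁰ (L →ₗ[ℤ_[p]] QpModZp p)) :=
    fun l => Submodule.span ℚ_[p] (ι '' (A l : Set (L →ₗ[ℤ_[p]] QpModZp p)))
  let d : Λ → ℕ := fun l => Module.finrank ℚ_[p] (Sp l)
  have hne : (Set.range d).Nonempty := Set.range_nonempty d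
  obtain ⟨l₀, hl₀⟩ : ∃ l₀, d l₀ = sInf (Set.range d) := Nat.sInf_mem hne
  refine ⟨l₀, fun l hl => ?_⟩
  -- key containment A l₀ ≤ A l
  have hkey : A l₀ ≤ A l := by
    have hAle : A l ≤ A l₀ := hAanti hl
    have hsple : Sp l ≤ Sp l₀ := Submodule.span_mono (Set.image_mono hAle)
    have hd1 : d l₀ ≤ d l := hl₀ ▸ Nat.sInf_le (show d l ∈ Set.range d from ⟨l, rfl⟩)
    letI : AddCommGroup (LocalizedModule ℤ_[p]⁰ (L →ₗ[ℤ_[p]] QpModZp p)) :=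
      OreLocalization.instAddCommGroup
    have hsp : Sp l = Sp l₀ := Submodule.eq_of_le_of_finrank_le hsple hd1
    intro φ hφ
    have hmem : ι φ ∈ Sp l := by
      rw [hsp]
      exact Submodule.subset_span ⟨φ, hφ, rfl⟩
    rw [Submodule.mem_span_set'] at hmem
    obtain ⟨n, q, g, hsum⟩ := hmem
    choose m hm hmι using fun i : Fin n => (g i).2
    obtain ⟨b, hb⟩ := IsLocalization.exist_integer_multiples ℤ_[p]⁰ Finset.univ q
    have hb' : ∀ i : Fin n, ∃ a : ℤ_[p],
        algebraMap ℤ_[p] ℚ_[p] a = (b : ℤ_[p]) • q i := fun i => hb i (Finset.mem_univ i)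
    choose c hc using hb'
    have hcomp : ι ((b : ℤ_[p]) • φ) = ι (∑ i, c i • m i) := by
      calc ι ((b : ℤ_[p]) • φ) = (b : ℤ_[p]) • ι φ := map_smul ι _ _
        _ = (b : ℤ_[p]) • ∑ i, q i • (g i : LocalizedModule ℤ_[p]⁰ (L →ₗ[ℤ_[p]] QpModZp p)) := by
            rw [hsum]
        _ = ∑ i, (b : ℤ_[p]) • (q i • (g i : LocalizedModule ℤ_[p]⁰ (L →ₗ[ℤ_[p]] QpModZp p))) :=
            Finset.smul_sum
        _ = ∑ i, c i • (ι (m i)) := by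
            refine Finset.sum_congr rfl fun i _ => ?_
            rw [hmι i, ← smul_assoc, ← hc i, algebraMap_smul]
        _ = ι (∑ i, c i • m i) := by
            rw [map_sum]
            exact Finset.sum_congr rfl fun i _ => (map_smul ι _ _).symm
    have hker : ∃ u : ℤ_[p]⁰, (u : ℤ_[p]) • ((b : ℤ_[p]) • φ) = (u : ℤ_[p]) • (∑ i, c i • m i) := by
      have h1 : LocalizedModule.mk ((b : ℤ_[p]) • φ) (1 : ℤ_[p]⁰)
          = LocalizedModule.mk (∑ i, c i • m i) (1 : ℤ_[p]⁰) := by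
        have e1 : ι ((b : ℤ_[p]) • φ) = LocalizedModule.mk ((b : ℤ_[p]) • φ) 1 := rfl
        have e2 : ι (∑ i, c i • m i) = LocalizedModule.mk (∑ i, c i • m i) 1 := rfl
        rw [← e1, ← e2, hcomp]
      obtain ⟨u, hu⟩ := LocalizedModule.mk_eq.mp h1
      refine ⟨u, ?_⟩
      simpa [one_smul, Submonoid.smul_def] using hu
    obtain ⟨u, hu⟩ := hker
    have ha : ((u : ℤ_[p]) * (b : ℤ_[p])) ≠ 0 :=
      mul_ne_zero (mem_nonZeroDivisors_iff_ne_zero.mp u.2)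
        (mem_nonZeroDivisors_iff_ne_zero.mp b.2)
    refine hscal l₀ l hl _ ha φ hφ ?_
    have heq : ((u : ℤ_[p]) * (b : ℤ_[p])) • φ = (u : ℤ_[p]) • (∑ i, c i • m i) := by
      rw [mul_smul]; exact hu
    rw [heq]
    exact Submodule.smul_mem _ _
      (Submodule.sum_mem _ fun i _ => Submodule.smul_mem _ _ (hm i))
  -- conclude equality of ranges
  have hRle : LinearMap.range (f l₀) ≤ LinearMap.range (f l) := by
    rintro x hx
    obtain ⟨n, rfl⟩ := hx
    exact ⟨t hl n, LinearMap.congr_fun (hf l₀ l hl) n⟩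
  refine le_antisymm ?_ hRle
  rintro x hx
  obtain ⟨n, rfl⟩ := hx
  by_contra hxR
  obtain ⟨φ, hvan, hne0⟩ := separating (LinearMap.range (f l₀)) hxR
  have hφA : φ ∈ A l₀ := by
    rw [hmemA]
    exact fun n' => hvan _ ⟨n', rfl⟩
  exact hne0 ((hmemA l φ).mp (hkey hφA) n)
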